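/- The system (D,H) is s-sparse-controllable if and only if for every λ ∈ ℂ the N×(N+L) complex block matrix [λI − D | H] has rank N and, in addition, N ≤ s + rank(D). -/

import Mathlib

open Matrix

/-- `h` is `s`-sparse: at most `s` nonzero entries. -/
def IsSparse {L : ℕ} (s : ℕ) (h : Fin L → ℝ) : Prop :=
  {i : Fin L | h i ≠ 0}.ncard ≤ s

/-- Inputs `h 0, …, h (K-1)` steer the state `xinit` to `xfinal`:
`xfinal − D^K xinit = ∑_{k=1}^{K} D^{K−k} H h_k`. -/
def Steers {N L : ℕ} (D : Matrix (Fin N) (Fin N) ℝ) (H : Matrix (Fin N) (Fin L) ℝ)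
    (K : ℕ) (h : Fin K → Fin L → ℝ) (xinit xfinal : Fin N → ℝ) : Prop :=
  xfinal - (D ^ K) *ᵥ xinit = ∑ k : Fin K, (D ^ (K - 1 - (k : ℕ))) *ᵥ (H *ᵥ h k)

/-- The system `(D, H)` is `s`-sparse-controllable. -/
def SparseControllable (N L s : ℕ) (D : Matrix (Fin N) (Fin N) ℝ)
    (H : Matrix (Fin N) (Fin L) ℝ) : Prop :=
  ∀ xinit xfinal : Fin N → ℝ, ∃ K : ℕ, 0 < K ∧ ∃ h : Fin K → Fin L → ℝ,
    (∀ k, IsSparse s (h k)) ∧ Steers D H K h xinit xfinal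

/-- PBH block matrix `[λ I − D | H]` over `ℂ` (entrywise complexification). -/
noncomputable def pbhMatrix {N L : ℕ} (D : Matrix (Fin N) (Fin N) ℝ)
    (H : Matrix (Fin N) (Fin L) ℝ) (lam : ℂ) : Matrix (Fin N) (Fin N ⊕ Fin L) ℂ :=
  Matrix.fromCols (lam • (1 : Matrix (Fin N) (Fin N) ℂ) - D.map Complex.ofReal)
    (H.map Complex.ofReal)


open Matrix Submodule Module
namespace SCAux



variable {N L : ℕ}

/-- decompose membership in a finite sup of submodules -/
lemma mem_finsetSup_exists {ι R M : Type*} [Ring R] [AddCommGroup M] [Module R M]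
    [DecidableEq ι]
    (s : Finset ι) (p : ι → Submodule R M) {x : M} (hx : x ∈ s.sup p) :
    ∃ y : ι → M, (∀ i, y i ∈ p i) ∧ x = ∑ i ∈ s, y i := by
  induction s using Finset.cons_induction generalizing x with
  | empty =>
      refine ⟨fun _ => 0, fun i => (p i).zero_mem, ?_⟩
      simpa using (by simpa [Finset.sup_empty] using hx : x = (0:M)) ▸ rfl
  | cons a s ha ih =>
      rw [Finset.sup_cons] at hx
      obtain ⟨y, hy, z, hz, rfl⟩ := Submodule.mem_sup.mp hx
      obtain ⟨w, hw, rfl⟩ := ih hz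
      refine ⟨fun i => if i = a then y else w i, fun i => ?_, ?_⟩
      · by_cases h : i = a
        · subst h; simpa using hy
        · simpa [h] using hw i
      · rw [Finset.sum_cons, if_pos rfl]
        congr 1
        exact Finset.sum_congr rfl fun i hi => by
          rw [if_neg]; rintro rfl; exact ha hi

lemma exists_vecMul_eq_zero_of_rank_lt {m : Type*} [Fintype m] {M : Matrix (Fin N) m ℂ}
    (h : M.rank < N) : ∃ z : Fin N → ℂ, z ≠ 0 ∧ z ᵥ* M = 0 := by
  have hrk : Mᵀ.rank < N := by rwa [Matrix.rank_transpose]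
  have hadd := LinearMap.finrank_range_add_finrank_ker (Mᵀ.mulVecLin)
  have hdom : finrank ℂ (Fin N → ℂ) = N := by simp
  rw [hdom] at hadd
  have hker : LinearMap.ker Mᵀ.mulVecLin ≠ ⊥ := by
    intro hb
    rw [hb, finrank_bot, add_zero] at hadd
    have hr : Mᵀ.rank = finrank ℂ (LinearMap.range Mᵀ.mulVecLin) := rfl
    omega
  obtain ⟨z, hz, hz0⟩ := Submodule.exists_mem_ne_zero_of_ne_bot hker
  refine ⟨z, hz0, ?_⟩
  have : Mᵀ *ᵥ z = 0 := hz
  rwa [Matrix.mulVec_transpose] at this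

lemma rank_lt_of_vecMul_eq_zero {m : Type*} [Fintype m] {M : Matrix (Fin N) m ℂ}
    {z : Fin N → ℂ} (hz : z ≠ 0) (h : z ᵥ* M = 0) : M.rank < N := by
  have hadd := LinearMap.finrank_range_add_finrank_ker (Mᵀ.mulVecLin)
  have hdom : finrank ℂ (Fin N → ℂ) = N := by simp
  rw [hdom] at hadd
  have hzker : z ∈ LinearMap.ker Mᵀ.mulVecLin := by
    simp only [LinearMap.mem_ker, mulVecLin_apply, Matrix.mulVec_transpose, h]
  have hker : LinearMap.ker Mᵀ.mulVecLin ≠ ⊥ := fun hb => hz (by rw [hb] at hzker; simpa using hzker)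
  have hker' : finrank ℂ (LinearMap.ker Mᵀ.mulVecLin) ≠ 0 :=
    fun h0 => hker (Submodule.finrank_eq_zero.mp h0)
  rw [← Matrix.rank_transpose]
  have hr : Mᵀ.rank = finrank ℂ (LinearMap.range Mᵀ.mulVecLin) := rfl
  omega




variable {N L : ℕ}

noncomputable def cmap {m n : Type*} (A : Matrix m n ℝ) : Matrix m n ℂ :=
  A.map Complex.ofReal

def cvec {n : Type*} (v : n → ℝ) : n → ℂ := fun i => (v i : ℂ)

lemma cmap_mul {m n p : Type*} [Fintype n] (A : Matrix m n ℝ) (B : Matrix n p ℝ) :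
    cmap (A * B) = cmap A * cmap B :=
  Matrix.map_mul (f := Complex.ofRealHom)

lemma cmap_one : cmap (1 : Matrix (Fin N) (Fin N) ℝ) = 1 :=
  Matrix.map_one _ Complex.ofReal_zero Complex.ofReal_one

lemma cmap_pow (A : Matrix (Fin N) (Fin N) ℝ) (n : ℕ) :
    cmap (A ^ n) = (cmap A) ^ n := by
  induction n with
  | zero => rw [pow_zero, pow_zero]; exact cmap_one
  | succ n ih => rw [pow_succ, pow_succ, cmap_mul, ih]

lemma pi_decomp {n : Type*} [Fintype n] [DecidableEq n] {R : Type*} [Semiring R] (x : n → R) :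
    x = ∑ i, x i • (Pi.single i 1 : n → R) := by
  funext j
  rw [Finset.sum_apply]
  simp [Pi.single_apply]

lemma cvec_mulVec {m n : Type*} [Fintype n] (A : Matrix m n ℝ) (v : n → ℝ) :
    cvec (A *ᵥ v) = cmap A *ᵥ cvec v := by
  funext i
  simp [cvec, cmap, Matrix.mulVec, dotProduct]

lemma cvec_single [DecidableEq (Fin L)] (l : Fin L) :
    cvec (Pi.single l 1 : Fin L → ℝ) = (Pi.single l 1 : Fin L → ℂ) := by
  funext j
  rcases eq_or_ne j l with rfl | h
  · simp [cvec]
  · simp [cvec, Pi.single_apply, h]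

variable (D : Matrix (Fin N) (Fin N) ℝ) (H : Matrix (Fin N) (Fin L) ℝ)

noncomputable def gen (j : ℕ) (l : Fin L) : Fin N → ℝ :=
  (D ^ j) *ᵥ (H *ᵥ Pi.single l 1)

noncomputable def ctrl : Submodule ℝ (Fin N → ℝ) :=
  span ℝ (Set.range fun p : ℕ × Fin L => gen D H p.1 p.2)

noncomputable def genC (j : ℕ) (l : Fin L) : Fin N → ℂ :=
  ((cmap D) ^ j) *ᵥ (cmap H *ᵥ Pi.single l 1)

noncomputable def ctrlC : Submodule ℂ (Fin N → ℂ) :=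
  span ℂ (Set.range fun p : ℕ × Fin L => genC D H p.1 p.2)

lemma cvec_gen (j : ℕ) (l : Fin L) : cvec (gen D H j l) = genC D H j l := by
  rw [gen, genC, cvec_mulVec, cvec_mulVec, cmap_pow, cvec_single]

lemma genC_succ (j : ℕ) (l : Fin L) :
    cmap D *ᵥ genC D H j l = genC D H (j + 1) l := by
  rw [genC, genC, Matrix.mulVec_mulVec, ← pow_succ']

lemma mem_ctrlC_of_mulVec_H (u : Fin L → ℂ) : cmap H *ᵥ u ∈ ctrlC D H := by
  have : cmap H *ᵥ u = ∑ l : Fin L, u l • genC D H 0 l := by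
    conv_lhs => rw [pi_decomp u, ← Matrix.mulVecLin_apply, map_sum]
    refine Finset.sum_congr rfl fun l _ => ?_
    rw [LinearMap.map_smul, Matrix.mulVecLin_apply, genC, pow_zero, Matrix.one_mulVec]
  rw [this]
  exact sum_mem fun l _ => smul_mem _ _ (subset_span ⟨(0, l), rfl⟩)

lemma ctrlC_invariant : ∀ x ∈ ctrlC D H, cmap D *ᵥ x ∈ ctrlC D H := by
  intro x hx
  induction hx using Submodule.span_induction with
  | mem x hx =>
      obtain ⟨⟨j, l⟩, rfl⟩ := hx
      rw [genC_succ]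
      exact subset_span ⟨(j + 1, l), rfl⟩
  | zero => simpa [Matrix.mulVec_zero] using zero_mem (ctrlC D H)
  | add x y _ _ hx hy => rw [Matrix.mulVec_add]; exact add_mem hx hy
  | smul c x _ hx => rw [Matrix.mulVec_smul]; exact smul_mem _ _ hx

lemma ctrlC_eq_top (hN : 0 < N)
    (hpbh : ∀ lam : ℂ, (pbhMatrix D H lam).rank = N) : ctrlC D H = ⊤ := by
  by_contra hne
  have hlt : ctrlC D H < ⊤ := lt_top_iff_ne_top.mpr hne
  haveI : Nontrivial ((Fin N → ℂ) ⧸ ctrlC D H) :=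
    Submodule.Quotient.nontrivial_iff.mpr hlt.ne
  set p := ctrlC D H with hp
  have hcomap : p ≤ p.comap (cmap D).mulVecLin := fun x hx => by
    simpa [Submodule.mem_comap, Matrix.mulVecLin_apply] using ctrlC_invariant D H x hx
  set g : ((Fin N → ℂ) ⧸ p) →ₗ[ℂ] ((Fin N → ℂ) ⧸ p) :=
    p.mapQ p (cmap D).mulVecLin hcomap with hg
  obtain ⟨μ, hμ⟩ := Module.End.exists_eigenvalue (g.dualMap)
  obtain ⟨ψ, hψ⟩ := hμ.exists_hasEigenvector
  have hψ0 : ψ ≠ 0 := hψ.right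
  have hψeq : ∀ q, ψ (g q) = μ * ψ q := by
    intro q
    have := hψ.apply_eq_smul
    have h2 : (g.dualMap ψ) q = (μ • ψ) q := by rw [this]
    simpa [LinearMap.dualMap_apply] using h2
  set φ : (Fin N → ℂ) →ₗ[ℂ] ℂ := ψ.comp p.mkQ with hφdef
  set z : Fin N → ℂ := fun i => φ (Pi.single i 1) with hz
  have hφ : ∀ x : Fin N → ℂ, φ x = ∑ i, x i * z i := by
    intro x
    conv_lhs => rw [pi_decomp x, map_sum]
    refine Finset.sum_congr rfl fun i _ => by rw [LinearMap.map_smul, smul_eq_mul, mul_comm]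
  have hφD : ∀ x, φ (cmap D *ᵥ x) = μ * φ x := by
    intro x
    have h1 : p.mkQ (cmap D *ᵥ x) = g (p.mkQ x) := by
      rw [hg]
      rw [Submodule.mkQ_apply, Submodule.mkQ_apply, Submodule.mapQ_apply,
        Matrix.mulVecLin_apply]
    simp only [hφdef, LinearMap.comp_apply, h1, hψeq]
  have hφH : ∀ u, φ (cmap H *ᵥ u) = 0 := by
    intro u
    have : cmap H *ᵥ u ∈ p := mem_ctrlC_of_mulVec_H D H u
    simp only [hφdef, LinearMap.comp_apply]
    rw [show p.mkQ (cmap H *ᵥ u) = 0 from (Submodule.Quotient.mk_eq_zero p).mpr this,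
      map_zero]
  have hzne : z ≠ 0 := by
    intro h0
    apply hψ0
    refine LinearMap.ext fun q => ?_
    obtain ⟨x, rfl⟩ := p.mkQ_surjective q
    have : φ x = 0 := by rw [hφ]; simp [h0]
    simpa [hφdef] using this
  have hzD : z ᵥ* cmap D = μ • z := by
    funext j
    have h1 : φ (cmap D *ᵥ Pi.single j 1) = μ * z j := by rw [hφD]
    have h2 : φ (cmap D *ᵥ Pi.single j 1) = ∑ i, cmap D i j * z i := by
      rw [hφ]
      refine Finset.sum_congr rfl fun i _ => ?_
      simp [Matrix.mulVec_single]
    have : (z ᵥ* cmap D) j = ∑ i, cmap D i j * z i := by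
      simp [Matrix.vecMul, dotProduct, mul_comm]
    rw [this, ← h2, h1, Pi.smul_apply, smul_eq_mul]
  have hzH : z ᵥ* cmap H = 0 := by
    funext l
    have h2 : φ (cmap H *ᵥ Pi.single l 1) = ∑ i, cmap H i l * z i := by
      rw [hφ]
      refine Finset.sum_congr rfl fun i _ => ?_
      simp [Matrix.mulVec_single]
    have : (z ᵥ* cmap H) l = ∑ i, cmap H i l * z i := by
      simp [Matrix.vecMul, dotProduct, mul_comm]
    rw [this, ← h2, hφH, Pi.zero_apply]
  have hzero : z ᵥ* pbhMatrix D H μ = 0 := by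
    rw [pbhMatrix, Matrix.vecMul_fromCols]
    have h1 : z ᵥ* (μ • (1 : Matrix (Fin N) (Fin N) ℂ) - D.map Complex.ofReal) = 0 := by
      rw [Matrix.vecMul_sub]
      have : z ᵥ* (μ • (1 : Matrix (Fin N) (Fin N) ℂ)) = μ • z := by
        funext j
        simp [Matrix.vecMul, dotProduct, Matrix.one_apply, mul_comm]
      rw [this]
      rw [show (D.map Complex.ofReal) = cmap D from rfl, hzD, sub_self]
    rw [h1, show (H.map Complex.ofReal) = cmap H from rfl, hzH]
    funext i
    cases i <;> rfl
  exact absurd (hpbh μ) (Nat.ne_of_lt (rank_lt_of_vecMul_eq_zero hzne hzero))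

variable {N L : ℕ} (D : Matrix (Fin N) (Fin N) ℝ) (H : Matrix (Fin N) (Fin L) ℝ)

lemma ctrl_eq_top (h : ctrlC D H = ⊤) : ctrl D H = ⊤ := by
  rw [eq_top_iff]
  intro x _
  have hx : cvec x ∈ ctrlC D H := h ▸ mem_top
  have key : ∀ y ∈ ctrlC D H,
      ((fun i => (y i).re) ∈ ctrl D H) ∧ ((fun i => (y i).im) ∈ ctrl D H) := by
    intro y hy
    induction hy using Submodule.span_induction with
    | mem y hy =>
        obtain ⟨⟨j, l⟩, rfl⟩ := hy
        constructor
        · have hre : (fun i => ((genC D H j l) i).re) = gen D H j l := by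
            funext i; rw [← cvec_gen]; simp [cvec]
          rw [hre]; exact subset_span ⟨(j, l), rfl⟩
        · have him : (fun i => ((genC D H j l) i).im) = (0 : Fin N → ℝ) := by
            funext i; rw [← cvec_gen]; simp [cvec]
          rw [him]; exact zero_mem _
    | zero =>
        exact ⟨zero_mem _, zero_mem _⟩
    | add a b _ _ ha hb =>
        constructor
        · have : (fun i => ((a + b) i).re)
              = (fun i => (a i).re) + (fun i => (b i).re) := by
            funext i; exact Complex.add_re _ _
          rw [this]; exact add_mem ha.1 hb.1
        · have : (fun i => ((a + b) i).im)
              = (fun i => (a i).im) + (fun i => (b i).im) := by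
            funext i; exact Complex.add_im _ _
          rw [this]; exact add_mem ha.2 hb.2
    | smul c a _ ha =>
        constructor
        · have : (fun i => ((c • a) i).re)
              = c.re • (fun i => (a i).re) - c.im • (fun i => (a i).im) := by
            funext i
            simp only [Pi.smul_apply, smul_eq_mul, Complex.mul_re, Pi.sub_apply]
          rw [this]; exact sub_mem (smul_mem _ _ ha.1) (smul_mem _ _ ha.2)
        · have : (fun i => ((c • a) i).im)
              = c.re • (fun i => (a i).im) + c.im • (fun i => (a i).re) := by
            funext i
            simp only [Pi.smul_apply, smul_eq_mul, Complex.mul_im, Pi.add_apply]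
          rw [this]; exact add_mem (smul_mem _ _ ha.2) (smul_mem _ _ ha.1)
  have := (key _ hx).1
  simpa [cvec] using this

/-- the columns of `H` -/
noncomputable def hcol (l : Fin L) : Fin N → ℝ := H *ᵥ Pi.single l 1

lemma span_hcol : span ℝ (Set.range (hcol H)) = LinearMap.range H.mulVecLin := by
  rw [Matrix.range_mulVecLin]
  congr 1
  ext y
  constructor
  · rintro ⟨l, rfl⟩
    exact ⟨l, by funext i; simp [hcol, Matrix.mulVec_single, Matrix.transpose_apply]⟩
  · rintro ⟨l, rfl⟩
    exact ⟨l, by funext i; simp [hcol, Matrix.mulVec_single, Matrix.transpose_apply]⟩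

lemma ranges_sup_eq_top (h : ctrl D H = ⊤) :
    LinearMap.range H.mulVecLin ⊔ LinearMap.range D.mulVecLin = ⊤ := by
  rw [eq_top_iff, ← h, ctrl, span_le]
  rintro x ⟨⟨j, l⟩, rfl⟩
  cases j with
  | zero =>
      apply Submodule.mem_sup_left
      exact ⟨Pi.single l 1, by
        simp only [Matrix.mulVecLin_apply, gen, pow_zero, Matrix.one_mulVec]⟩
  | succ j =>
      apply Submodule.mem_sup_right
      refine ⟨(D ^ j) *ᵥ (H *ᵥ Pi.single l 1), ?_⟩
      rw [Matrix.mulVecLin_apply, Matrix.mulVec_mulVec, ← pow_succ']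
      rfl

/-- greedy column selection -/
lemma exists_finset_cols (v : Fin L → (Fin N → ℝ)) :
    ∀ n (W : Submodule ℝ (Fin N → ℝ)), N - finrank ℝ W = n →
      W ⊔ span ℝ (Set.range v) = ⊤ →
      ∃ T : Finset (Fin L), T.card + finrank ℝ W ≤ N ∧
        W ⊔ span ℝ (v '' ↑T) = ⊤ := by
  intro n
  induction n using Nat.strong_induction_on with
  | _ n ih =>
    intro W hn hsup
    by_cases hW : W = ⊤
    · refine ⟨∅, ?_, by simp [hW]⟩
      have : finrank ℝ W = N := by
        rw [hW, finrank_top]; simp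
      simp [this]
    · have hfrW : finrank ℝ W ≤ N := by
        simpa using Submodule.finrank_le W
      obtain ⟨l, hl⟩ : ∃ l, v l ∉ W := by
        by_contra hall
        push_neg at hall
        apply hW
        rw [eq_top_iff, ← hsup, sup_le_iff]
        exact ⟨le_rfl, by rw [span_le]; rintro x ⟨l, rfl⟩; exact hall l⟩
      set W' := W ⊔ span ℝ {v l} with hW'
      have hlt : W < W' := by
        refine lt_of_le_of_ne le_sup_left fun he => hl ?_
        have : v l ∈ W' := Submodule.mem_sup_right (mem_span_singleton_self (v l))
        rwa [← he] at this
      have hfr : finrank ℝ W < finrank ℝ W' := Submodule.finrank_lt_finrank_of_lt hlt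
      have hfr' : finrank ℝ W' ≤ N := by simpa using Submodule.finrank_le W'
      have hsup' : W' ⊔ span ℝ (Set.range v) = ⊤ := by
        rw [hW', sup_assoc, ← hsup]
        congr 1
        rw [sup_eq_right]
        exact span_mono (Set.singleton_subset_iff.mpr ⟨l, rfl⟩)
      obtain ⟨T', hT'card, hT'⟩ :=
        ih (N - finrank ℝ W') (by omega) W' rfl hsup'
      refine ⟨insert l T', ?_, ?_⟩
      · have := Finset.card_insert_le l T'
        omega
      · rw [Finset.coe_insert, Set.image_insert_eq, span_insert, ← sup_assoc]
        have : W ⊔ span ℝ {v l} = W' := rfl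
        rw [show (ℝ ∙ v l) = span ℝ {v l} from rfl, this, hT']

lemma sum_mulVec {ι : Type*} (s : Finset ι) (M : ι → Matrix (Fin N) (Fin N) ℝ)
    (w : Fin N → ℝ) : (∑ i ∈ s, M i) *ᵥ w = ∑ i ∈ s, (M i) *ᵥ w := by
  induction s using Finset.cons_induction with
  | empty => simp [Matrix.zero_mulVec]
  | cons a s ha ih => rw [Finset.sum_cons, Finset.sum_cons, Matrix.add_mulVec, ih]

/-- Cayley–Hamilton, mulVec form -/
lemma ch_mulVec (hN : 0 < N) (w : Fin N → ℝ) :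
    (D ^ N) *ᵥ w = ∑ i ∈ Finset.range N, (-(D.charpoly.coeff i)) • ((D ^ i) *ᵥ w) := by
  have hch := D.aeval_self_charpoly
  rw [Polynomial.aeval_eq_sum_range] at hch
  rw [Matrix.charpoly_natDegree_eq_dim, Fintype.card_fin, Finset.sum_range_succ] at hch
  have hlead : D.charpoly.coeff N = 1 := by
    have h1 := D.charpoly_monic
    have h2 : D.charpoly.natDegree = N := by
      rw [Matrix.charpoly_natDegree_eq_dim, Fintype.card_fin]
    have h3 := h1.coeff_natDegree
    rwa [h2] at h3
  rw [hlead, one_smul] at hch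
  have hDN : (D ^ N) = ∑ i ∈ Finset.range N, (-(D.charpoly.coeff i)) • D ^ i := by
    have := eq_neg_of_add_eq_zero_right hch
    rw [this, ← Finset.sum_neg_distrib]
    exact Finset.sum_congr rfl fun i _ => by rw [neg_smul]
  calc (D ^ N) *ᵥ w
      = (∑ i ∈ Finset.range N, (-(D.charpoly.coeff i)) • D ^ i) *ᵥ w := by rw [← hDN]
    _ = ∑ i ∈ Finset.range N, (-(D.charpoly.coeff i)) • ((D ^ i) *ᵥ w) := by
        rw [sum_mulVec]
        exact Finset.sum_congr rfl fun i _ => by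
          rw [Matrix.smul_mulVec]
variable {N L : ℕ} (D : Matrix (Fin N) (Fin N) ℝ) (H : Matrix (Fin N) (Fin L) ℝ)

noncomputable def bctrl : Submodule ℝ (Fin N → ℝ) :=
  span ℝ (Set.range fun p : Fin N × Fin L => gen D H p.1 p.2)

lemma gen_mem_bctrl (hN : 0 < N) : ∀ (j : ℕ) (l : Fin L), gen D H j l ∈ bctrl D H := by
  intro j
  induction j using Nat.strong_induction_on with
  | _ j ih =>
    intro l
    by_cases hj : j < N
    · exact subset_span ⟨(⟨j, hj⟩, l), rfl⟩
    · push_neg at hj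
      have hdecomp : gen D H j l
          = ∑ i ∈ Finset.range N, (-(D.charpoly.coeff i)) • gen D H (j - N + i) l := by
        simp only [gen]
        have h1 : j = (j - N) + N := (Nat.sub_add_cancel hj).symm
        conv_lhs => rw [h1]
        rw [pow_add, ← Matrix.mulVec_mulVec, ch_mulVec D hN, ← Matrix.mulVecLin_apply,
          map_sum]
        refine Finset.sum_congr rfl fun i hi => ?_
        rw [LinearMap.map_smul, Matrix.mulVecLin_apply, Matrix.mulVec_mulVec, ← pow_add]
      rw [hdecomp]
      refine sum_mem fun i hi => smul_mem _ _ (ih (j - N + i) ?_ l)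
      have := Finset.mem_range.mp hi; omega

lemma bctrl_eq_top (hN : 0 < N) (h : ctrl D H = ⊤) : bctrl D H = ⊤ := by
  rw [eq_top_iff, ← h, ctrl, span_le]
  rintro x ⟨⟨j, l⟩, rfl⟩
  exact gen_mem_bctrl D H hN j l

lemma range_pow_succ (j : ℕ) :
    LinearMap.range ((D ^ (j + 1)).mulVecLin)
      = Submodule.map D.mulVecLin (LinearMap.range ((D ^ j).mulVecLin)) := by
  rw [pow_succ', Matrix.mulVecLin_mul, LinearMap.range_comp]

lemma range_pow_stab (hN : 0 < N) (k : ℕ) :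
    LinearMap.range ((D ^ (N + k)).mulVecLin) = LinearMap.range ((D ^ N).mulVecLin) := by
  obtain ⟨j, hjN, hj⟩ : ∃ j, j ≤ N ∧ LinearMap.range ((D ^ (j + 1)).mulVecLin)
      = LinearMap.range ((D ^ j).mulVecLin) := by
    by_contra hc
    push_neg at hc
    have hmono : ∀ j : ℕ, LinearMap.range ((D ^ (j + 1)).mulVecLin)
        ≤ LinearMap.range ((D ^ j).mulVecLin) := by
      intro j
      rw [pow_succ, Matrix.mulVecLin_mul, LinearMap.range_comp]
      exact LinearMap.map_le_range
    have hstrict : ∀ j ≤ N, finrank ℝ (LinearMap.range ((D ^ (j + 1)).mulVecLin))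
        < finrank ℝ (LinearMap.range ((D ^ j).mulVecLin)) := fun j hje =>
      Submodule.finrank_lt_finrank_of_lt (lt_of_le_of_ne (hmono j) (hc j hje))
    have key : ∀ j, j ≤ N + 1 → finrank ℝ (LinearMap.range ((D ^ j).mulVecLin)) + j ≤ N := by
      intro j
      induction j with
      | zero =>
          intro _
          have := Submodule.finrank_le (LinearMap.range ((D ^ 0).mulVecLin))
          simpa using this
      | succ j ihj =>
          intro hj1
          have h1 := ihj (by omega)
          have h2 := hstrict j (by omega)
          omega
    have := key (N + 1) le_rfl
    omega
  have hprop : ∀ m, LinearMap.range ((D ^ (j + m)).mulVecLin)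
      = LinearMap.range ((D ^ j).mulVecLin) := by
    intro m
    induction m with
    | zero => rfl
    | succ m ihm =>
        have : j + (m + 1) = (j + m) + 1 := rfl
        rw [this, range_pow_succ, ihm, ← range_pow_succ, hj]
  have e1 : N + k = j + (N + k - j) := by omega
  have e2 : N = j + (N - j) := by omega
  have h4 := hprop (N + k - j)
  rw [← e1] at h4
  have h5 := hprop (N - j)
  rw [← e2] at h5
  rw [h4, h5]

noncomputable def Efit : Submodule ℝ (Fin N → ℝ) := LinearMap.range ((D ^ N).mulVecLin)

lemma map_D_Efit (hN : 0 < N) : Submodule.map D.mulVecLin (Efit D) = Efit D := by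
  rw [Efit, ← range_pow_succ]
  exact range_pow_stab D hN 1

lemma finrank_map_eq_of_le_Efit (hN : 0 < N) (C : Submodule ℝ (Fin N → ℝ)) (hCE : C ≤ Efit D) :
    finrank ℝ (Submodule.map D.mulVecLin C) = finrank ℝ C := by
  have hmapin : ∀ x ∈ Efit D, D.mulVecLin x ∈ Efit D := fun x hx => by
    rw [← map_D_Efit D hN]
    exact Submodule.mem_map_of_mem hx
  set f' : Efit D →ₗ[ℝ] Efit D := D.mulVecLin.restrict hmapin with hf'
  have hsurj : Function.Surjective f' := by
    rintro ⟨y, hy⟩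
    rw [← map_D_Efit D hN] at hy
    obtain ⟨x, hx, hfx⟩ := Submodule.mem_map.mp hy
    exact ⟨⟨x, hx⟩, Subtype.ext hfx⟩
  have hinj : Function.Injective f' := (LinearMap.injective_iff_surjective).mpr hsurj
  set g := D.mulVecLin.domRestrict C with hgdef
  have hker : LinearMap.ker g = ⊥ := by
    rw [Submodule.eq_bot_iff]
    rintro ⟨x, hxC⟩ hx
    have hx0 : D.mulVecLin x = 0 := hx
    have : f' ⟨x, hCE hxC⟩ = 0 := Subtype.ext (by
      simpa [hf', LinearMap.restrict_apply] using hx0)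
    have := hinj (a₁ := ⟨x, hCE hxC⟩) (a₂ := 0) (by simpa using this)
    simpa [Subtype.ext_iff] using this
  have hrange : LinearMap.range g = Submodule.map D.mulVecLin C :=
    LinearMap.range_domRestrict _ _
  have := LinearMap.finrank_range_add_finrank_ker g
  rw [hker, finrank_bot, add_zero, hrange] at this
  exact this

lemma map_pow_eq_of_invariant (hN : 0 < N) (C : Submodule ℝ (Fin N → ℝ)) (hCE : C ≤ Efit D)
    (hinv : Submodule.map D.mulVecLin C ≤ C) (k : ℕ) :
    Submodule.map ((D ^ k).mulVecLin) C = C := by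
  have h1 : Submodule.map D.mulVecLin C = C :=
    Submodule.eq_of_le_of_finrank_le hinv (le_of_eq (finrank_map_eq_of_le_Efit D hN C hCE).symm)
  induction k with
  | zero => simp [pow_zero, Matrix.mulVecLin_one, Submodule.map_id]
  | succ k ihk =>
      rw [pow_succ', Matrix.mulVecLin_mul, Submodule.map_comp, ihk, h1]

noncomputable def Ct (t : Fin L) : Submodule ℝ (Fin N → ℝ) :=
  span ℝ (Set.range fun i : Fin N => gen D H (N + (i : ℕ)) t)

lemma genN_mem_Ct (hN : 0 < N) : ∀ (j : ℕ) (t : Fin L), gen D H (N + j) t ∈ Ct D H t := by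
  intro j
  induction j using Nat.strong_induction_on with
  | _ j ih =>
    intro t
    by_cases hj : j < N
    · exact subset_span ⟨⟨j, hj⟩, rfl⟩
    · push_neg at hj
      have hdecomp : gen D H (N + j) t
          = ∑ i ∈ Finset.range N, (-(D.charpoly.coeff i)) • gen D H (j + i) t := by
        simp only [gen]
        have h1 : N + j = j + N := by omega
        conv_lhs => rw [h1]
        rw [pow_add, ← Matrix.mulVec_mulVec, ch_mulVec D hN, ← Matrix.mulVecLin_apply,
          map_sum]
        refine Finset.sum_congr rfl fun i hi => ?_
        rw [LinearMap.map_smul, Matrix.mulVecLin_apply, Matrix.mulVec_mulVec, ← pow_add]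
      rw [hdecomp]
      refine sum_mem fun i hi => smul_mem _ _ ?_
      have hiN := Finset.mem_range.mp hi
      have h2 : j + i = N + (j - N + i) := by omega
      rw [h2]
      exact ih (j - N + i) (by omega) t

lemma Ct_le_Efit (t : Fin L) : Ct D H t ≤ Efit D := by
  rw [Ct, span_le]
  rintro x ⟨i, rfl⟩
  exact ⟨(D ^ (i : ℕ)) *ᵥ (H *ᵥ Pi.single t 1), by
    rw [Matrix.mulVecLin_apply, Matrix.mulVec_mulVec, ← pow_add]; rfl⟩

lemma map_D_Ct_le (hN : 0 < N) (t : Fin L) :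
    Submodule.map D.mulVecLin (Ct D H t) ≤ Ct D H t := by
  rw [Ct, Submodule.map_span, span_le]
  rintro x ⟨y, ⟨i, rfl⟩, rfl⟩
  have : D.mulVecLin (gen D H (N + (i : ℕ)) t) = gen D H (N + ((i : ℕ) + 1)) t := by
    simp only [gen, Matrix.mulVecLin_apply, Matrix.mulVec_mulVec]
    rw [← Matrix.mul_assoc, ← pow_succ']
    have harg : N + ((i : ℕ) + 1) = (N + (i : ℕ)) + 1 := by omega
    rw [harg]
  rw [this]
  exact genN_mem_Ct D H hN _ t

lemma map_pow_Ct (hN : 0 < N) (t : Fin L) (k : ℕ) :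
    Submodule.map ((D ^ k).mulVecLin) (Ct D H t) = Ct D H t :=
  map_pow_eq_of_invariant D hN _ (Ct_le_Efit D H t) (map_D_Ct_le D H hN t) k

lemma Efit_eq_sup_Ct (hN : 0 < N) (hctrl : ctrl D H = ⊤) :
    Efit D = Finset.univ.sup (fun t : Fin L => Ct D H t) := by
  apply le_antisymm
  · have h1 : Efit D = Submodule.map ((D ^ N).mulVecLin) (bctrl D H) := by
      rw [bctrl_eq_top D H hN hctrl, Submodule.map_top, Efit]
    rw [h1, bctrl, Submodule.map_span, span_le]
    rintro x ⟨y, ⟨⟨i, l⟩, rfl⟩, rfl⟩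
    have : (D ^ N).mulVecLin (gen D H (i : ℕ) l) = gen D H (N + (i : ℕ)) l := by
      simp only [gen, Matrix.mulVecLin_apply, Matrix.mulVec_mulVec]
      rw [← Matrix.mul_assoc, ← pow_add]
    rw [this]
    exact (Finset.le_sup (f := fun t : Fin L => Ct D H t) (Finset.mem_univ l))
      (genN_mem_Ct D H hN _ l)
  · exact Finset.sup_le fun t _ => Ct_le_Efit D H t

lemma Wchain (U : Submodule ℝ (Fin N → ℝ))
    (hU : U ⊔ LinearMap.range D.mulVecLin = ⊤) (m : ℕ) :
    ((Finset.range m).sup fun i => Submodule.map ((D ^ i).mulVecLin) U)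
      ⊔ LinearMap.range ((D ^ m).mulVecLin) = ⊤ := by
  induction m with
  | zero =>
      have : LinearMap.range ((D ^ 0).mulVecLin) = ⊤ := by
        rw [pow_zero, Matrix.mulVecLin_one, LinearMap.range_id]
      rw [this, sup_top_eq]
  | succ m ih =>
      have h1 : LinearMap.range ((D ^ m).mulVecLin)
          = Submodule.map ((D ^ m).mulVecLin) U ⊔ LinearMap.range ((D ^ (m + 1)).mulVecLin) := by
        conv_lhs => rw [← Submodule.map_top ((D ^ m).mulVecLin), ← hU]
        rw [Submodule.map_sup]
        congr 1
        rw [← LinearMap.range_comp, ← Matrix.mulVecLin_mul, ← pow_succ]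
      rw [Finset.range_add_one, Finset.sup_insert]
      rw [sup_comm (Submodule.map ((D ^ m).mulVecLin) U) _, sup_assoc, ← h1, ih]
variable {N L : ℕ} (D : Matrix (Fin N) (Fin N) ℝ) (H : Matrix (Fin N) (Fin L) ℝ)

lemma mulVec_eq_sum_cols (g : Fin L → ℝ) : H *ᵥ g = ∑ l, g l • hcol H l := by
  conv_lhs => rw [pi_decomp g, ← Matrix.mulVecLin_apply, map_sum]
  exact Finset.sum_congr rfl fun l _ => by
    rw [LinearMap.map_smul, Matrix.mulVecLin_apply]; rfl

lemma mem_spanCols_iff (T : Finset (Fin L)) (u : Fin N → ℝ)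
    (hu : u ∈ span ℝ (hcol H '' ↑T)) :
    ∃ g : Fin L → ℝ, (∀ l, l ∉ T → g l = 0) ∧ u = H *ᵥ g := by
  rw [Set.image_eq_range, mem_span_range_iff_exists_fun] at hu
  obtain ⟨c, hc⟩ := hu
  classical
  set gg : Fin L → ℝ := fun l => if h : l ∈ T then c ⟨l, by simpa using h⟩ else 0 with hgg
  refine ⟨gg, fun l hl => dif_neg hl, ?_⟩
  rw [mulVec_eq_sum_cols, ← hc]
  have key : ∀ i : (↑T : Set (Fin L)), gg ↑i = c i := by
    intro i
    have h1 : (i : Fin L) ∈ T := by simpa using i.2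
    simp only [hgg, dif_pos h1]
  calc ∑ i : (↑T : Set (Fin L)), c i • hcol H ↑i
      = ∑ i : (↑T : Set (Fin L)), gg ↑i • hcol H ↑i := by
        refine Finset.sum_congr rfl fun i _ => ?_
        rw [key i]
    _ = ∑ l ∈ T, gg l • hcol H l :=
        Finset.sum_finset_coe (fun l => gg l • hcol H l) T
    _ = ∑ l : Fin L, gg l • hcol H l :=
        Finset.sum_subset (Finset.subset_univ T)
          (fun l _ hl => by simp only [hgg, dif_neg hl, zero_smul])

lemma reach_all (s : ℕ) (hN : 0 < N) (hs : 0 < s)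
    (hpbh : ∀ lam : ℂ, (pbhMatrix D H lam).rank = N) (hrk : N ≤ s + D.rank)
    (x : Fin N → ℝ) :
    ∃ h : Fin (N + L * N) → Fin L → ℝ, (∀ k, IsSparse s (h k)) ∧
      x = ∑ k : Fin (N + L * N), (D ^ (N + L * N - 1 - (k : ℕ))) *ᵥ (H *ᵥ h k) := by
  classical
  have hctrl : ctrl D H = ⊤ := ctrl_eq_top D H (ctrlC_eq_top D H hN hpbh)
  have hHD := ranges_sup_eq_top D H hctrl
  have hsup0 : LinearMap.range D.mulVecLin ⊔ span ℝ (Set.range (hcol H)) = ⊤ := by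
    rw [span_hcol, sup_comm]; exact hHD
  obtain ⟨T, hTcard, hTsup⟩ := exists_finset_cols (hcol H)
    (N - finrank ℝ (LinearMap.range D.mulVecLin)) _ rfl hsup0
  have hTs : T.card ≤ s := by
    have hr : D.rank = finrank ℝ (LinearMap.range D.mulVecLin) := rfl
    omega
  have hUsup : span ℝ (hcol H '' ↑T) ⊔ LinearMap.range D.mulVecLin = ⊤ := by
    rw [sup_comm]; exact hTsup
  have hWE := Wchain D (span ℝ (hcol H '' ↑T)) hUsup N
  have hx : x ∈ ((Finset.range N).sup fun i =>
      Submodule.map ((D ^ i).mulVecLin) (span ℝ (hcol H '' ↑T))) ⊔ Efit D := by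
    rw [Efit, hWE]; exact mem_top
  obtain ⟨w, hw, e, he, hwe⟩ := Submodule.mem_sup.mp hx
  obtain ⟨y, hy, hysum⟩ := mem_finsetSup_exists _ _ hw
  choose uu huu hyu using fun i => Submodule.mem_map.mp (hy i)
  choose g hg0 hgu using fun i => mem_spanCols_iff H T (uu i) (huu i)
  rw [Efit_eq_sup_Ct D H hN hctrl] at he
  obtain ⟨cv, hcv, hesum⟩ := mem_finsetSup_exists _ _ he
  have hcv' : ∀ t : Fin L, cv t ∈ Submodule.map ((D ^ (N * (t : ℕ))).mulVecLin) (Ct D H t) := by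
    intro t; rw [map_pow_Ct D H hN]; exact hcv t
  choose cc hccCt hccmap using fun t => Submodule.mem_map.mp (hcv' t)
  have hcc2 : ∀ t : Fin L, ∃ a : Fin N → ℝ, ∑ i, a i • gen D H (N + (i : ℕ)) t = cc t := by
    intro t
    have h2 := hccCt t
    rwa [Ct, mem_span_range_iff_exists_fun] at h2
  choose a ha using hcc2
  set eqv : (Fin N ⊕ Fin L × Fin N) ≃ Fin (N + L * N) :=
    (Equiv.sumCongr (Equiv.refl (Fin N)) finProdFinEquiv).trans finSumFinEquiv with heqv
  have hval1 : ∀ i : Fin N, ((eqv (Sum.inl i)) : ℕ) = (i : ℕ) := by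
    intro i
    simp [heqv, finSumFinEquiv_apply_left]
  have hval2 : ∀ (t : Fin L) (i : Fin N),
      ((eqv (Sum.inr (t, i))) : ℕ) = N + ((i : ℕ) + N * (t : ℕ)) := by
    intro t i
    simp [heqv, finSumFinEquiv_apply_right]
  set hfun : (Fin N ⊕ Fin L × Fin N) → (Fin L → ℝ) :=
    Sum.elim (fun i => g (i : ℕ)) (fun p => a p.1 p.2 • (Pi.single p.1 1 : Fin L → ℝ)) with hhfun
  have hsparse : ∀ q, IsSparse s (hfun q) := by
    rintro (i | ⟨t, i⟩)
    · simp only [hhfun, Sum.elim_inl, IsSparse]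
      refine le_trans (le_trans (Set.ncard_le_ncard ?_ T.finite_toSet) ?_) hTs
      · intro l hl
        by_contra hlT
        exact hl (hg0 _ l hlT)
      · rw [Set.ncard_coe_finset]
    · simp only [hhfun, Sum.elim_inr, IsSparse]
      refine le_trans (le_trans (Set.ncard_le_ncard ?_ (Set.finite_singleton t)) ?_) hs
      · intro l hl
        simp only [Set.mem_setOf_eq] at hl
        by_contra hlt
        apply hl
        have h1 : (Pi.single t 1 : Fin L → ℝ) l = 0 :=
          Pi.single_eq_of_ne (by simpa using hlt) 1
        simp [h1]
      · rw [Set.ncard_singleton]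
  refine ⟨fun k => hfun (eqv.symm (Fin.rev k)), fun k => hsparse _, ?_⟩
  set F : Fin (N + L * N) → (Fin N → ℝ) :=
    fun p => (D ^ (p : ℕ)) *ᵥ (H *ᵥ hfun (eqv.symm p)) with hF
  have step1 : ∑ k : Fin (N + L * N),
      (D ^ (N + L * N - 1 - (k : ℕ))) *ᵥ (H *ᵥ hfun (eqv.symm (Fin.rev k)))
      = ∑ p, F p := by
    refine Fintype.sum_bijective Fin.rev Fin.rev_involutive.bijective _ _ fun k => ?_
    have hrev : N + L * N - 1 - (k : ℕ) = ((Fin.rev k) : ℕ) := by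
      rw [Fin.val_rev]; omega
    simp only [hF]
    rw [hrev]
  have step4 : ∑ i : Fin N, F (eqv (Sum.inl i)) = w := by
    have hterm : ∀ i : Fin N, F (eqv (Sum.inl i)) = y (i : ℕ) := by
      intro i
      simp only [hF]
      rw [Equiv.symm_apply_apply, hval1]
      simp only [hhfun, Sum.elim_inl]
      rw [← hgu (i : ℕ), ← Matrix.mulVecLin_apply, hyu]
    rw [Finset.sum_congr rfl fun i _ => hterm i]
    rw [← Finset.sum_range fun i => y i]
    exact hysum.symm
  have step5 : ∑ p : Fin L × Fin N, F (eqv (Sum.inr p)) = e := by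
    rw [Fintype.sum_prod_type]
    have hinner : ∀ t : Fin L, (∑ i : Fin N, F (eqv (Sum.inr (t, i)))) = cv t := by
      intro t
      have hterm : ∀ i : Fin N, F (eqv (Sum.inr (t, i)))
          = ((D ^ (N * (t : ℕ))).mulVecLin) (a t i • gen D H (N + (i : ℕ)) t) := by
        intro i
        simp only [hF]
        rw [Equiv.symm_apply_apply, hval2]
        simp only [hhfun, Sum.elim_inr]
        rw [Matrix.mulVec_smul, Matrix.mulVec_smul, LinearMap.map_smul]
        congr 1
        have hexp : N + ((i : ℕ) + N * (t : ℕ)) = N * (t : ℕ) + (N + (i : ℕ)) := by ring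
        rw [hexp, pow_add, ← Matrix.mulVec_mulVec]
        rw [Matrix.mulVecLin_apply]
        rfl
      rw [Finset.sum_congr rfl fun i _ => hterm i, ← map_sum, ha t, hccmap t]
    rw [Finset.sum_congr rfl fun t _ => hinner t]
    exact hesum.symm
  rw [step1, ← Equiv.sum_comp eqv F, Fintype.sum_sum_type, step4, step5, hwe]
variable {N L : ℕ} (D : Matrix (Fin N) (Fin N) ℝ) (H : Matrix (Fin N) (Fin L) ℝ)

lemma vecMul_smul_one (z : Fin N → ℂ) (μ : ℂ) :
    z ᵥ* (μ • (1 : Matrix (Fin N) (Fin N) ℂ)) = μ • z := by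
  funext j
  simp [Matrix.vecMul, dotProduct, Matrix.one_apply, mul_comm]

lemma vecMul_pow_eq (z : Fin N → ℂ) (lam : ℂ) (hzD : z ᵥ* cmap D = lam • z) (p : ℕ) :
    z ᵥ* ((cmap D) ^ p) = lam ^ p • z := by
  induction p with
  | zero => simp [pow_zero, Matrix.vecMul_one]
  | succ p ih =>
      rw [pow_succ, ← Matrix.vecMul_vecMul, ih, Matrix.smul_vecMul, hzD, smul_smul,
        ← pow_succ]

lemma cvec_sum {K : ℕ} (f : Fin K → (Fin N → ℝ)) :
    cvec (∑ k, f k) = ∑ k, cvec (f k) := by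
  funext i
  simp [cvec, Finset.sum_apply]

lemma dot_sum {K : ℕ} (z : Fin N → ℂ) (f : Fin K → (Fin N → ℂ)) :
    z ⬝ᵥ (∑ k, f k) = ∑ k, z ⬝ᵥ f k := by
  simp only [dotProduct, Finset.sum_apply, Finset.mul_sum]
  rw [Finset.sum_comm]

lemma pbh_rank_of_reach (hN : 0 < N) (s : ℕ)
    (hreach : ∀ x : Fin N → ℝ, ∃ K : ℕ, 0 < K ∧ ∃ h : Fin K → Fin L → ℝ,
      (∀ k, IsSparse s (h k)) ∧ x = ∑ k : Fin K, (D ^ (K - 1 - (k : ℕ))) *ᵥ (H *ᵥ h k))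
    (lam : ℂ) : (pbhMatrix D H lam).rank = N := by
  by_contra hne
  have hle : (pbhMatrix D H lam).rank ≤ N :=
    le_trans (Matrix.rank_le_card_height _) (by simp)
  obtain ⟨z, hz0, hzM⟩ := exists_vecMul_eq_zero_of_rank_lt (lt_of_le_of_ne hle hne)
  rw [pbhMatrix, Matrix.vecMul_fromCols] at hzM
  have h1 : z ᵥ* (lam • (1 : Matrix (Fin N) (Fin N) ℂ) - D.map Complex.ofReal) = 0 := by
    funext j; exact congrFun hzM (Sum.inl j)
  have h2 : z ᵥ* cmap H = 0 := by
    funext l; exact congrFun hzM (Sum.inr l)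
  rw [Matrix.vecMul_sub, vecMul_smul_one, sub_eq_zero] at h1
  have hzD : z ᵥ* cmap D = lam • z := h1.symm
  have hzero : ∀ x : Fin N → ℝ, z ⬝ᵥ cvec x = 0 := by
    intro x
    obtain ⟨K, hK, h, _, hx⟩ := hreach x
    rw [hx, cvec_sum]
    rw [dot_sum]
    refine Finset.sum_eq_zero fun k _ => ?_
    rw [cvec_mulVec, cvec_mulVec, cmap_pow, Matrix.dotProduct_mulVec,
      vecMul_pow_eq D z lam hzD, smul_dotProduct, Matrix.dotProduct_mulVec, h2,
      zero_dotProduct, smul_zero]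
  apply hz0
  funext i
  have := hzero (Pi.single i 1)
  rw [show cvec (Pi.single i 1 : Fin N → ℝ) = Pi.single i 1 from cvec_single i,
    dotProduct_single, mul_one] at this
  exact this

lemma dim_cond_of_reach (hN : 0 < N) (s : ℕ)
    (hreach : ∀ x : Fin N → ℝ, ∃ K : ℕ, 0 < K ∧ ∃ h : Fin K → Fin L → ℝ,
      (∀ k, IsSparse s (h k)) ∧ x = ∑ k : Fin K, (D ^ (K - 1 - (k : ℕ))) *ᵥ (H *ᵥ h k)) :
    N ≤ s + D.rank := by
  classical
  haveI : Nonempty (Fin N) := Fin.pos_iff_nonempty.mp hN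
  set P : Finset (Fin L) → Submodule ℝ (Fin N → ℝ) := fun T =>
    if T.card ≤ s then span ℝ (hcol H '' ↑T) ⊔ LinearMap.range D.mulVecLin else ⊥ with hP
  have hcover : ⋃ T : Finset (Fin L), (P T : Set (Fin N → ℝ)) = Set.univ := by
    rw [Set.eq_univ_iff_forall]
    intro x
    obtain ⟨K, hK, h, hsp, hx⟩ := hreach x
    set k0 : Fin K := ⟨K - 1, by omega⟩ with hk0
    have hsplit : x = (∑ k ∈ Finset.univ.erase k0, (D ^ (K - 1 - (k : ℕ))) *ᵥ (H *ᵥ h k))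
        + (D ^ (K - 1 - (k0 : ℕ))) *ᵥ (H *ᵥ h k0) := by
      rw [hx]
      exact (Finset.sum_erase_add _ _ (Finset.mem_univ k0)).symm
    have hfin : {l | h k0 l ≠ 0}.Finite := Set.toFinite _
    set T := hfin.toFinset with hT
    have hTcard : T.card ≤ s := by
      have hsp0 := hsp k0
      rw [IsSparse, Set.ncard_eq_toFinset_card _ hfin] at hsp0
      exact hsp0
    refine Set.mem_iUnion.mpr ⟨T, ?_⟩
    have hmem : x ∈ span ℝ (hcol H '' ↑T) ⊔ LinearMap.range D.mulVecLin := by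
      rw [hsplit]
      apply add_mem
      · apply Submodule.mem_sup_right
        apply sum_mem
        intro k hk
        have hkne : (k : ℕ) ≠ K - 1 := fun hc =>
          (Finset.mem_erase.mp hk).1 (Fin.ext (by rw [hc]))
        have hlt : (k : ℕ) < K := k.2
        have hpow : K - 1 - (k : ℕ) = (K - 2 - (k : ℕ)) + 1 := by omega
        rw [hpow, pow_succ', ← Matrix.mulVec_mulVec]
        exact ⟨_, rfl⟩
      · apply Submodule.mem_sup_left
        have hzz : K - 1 - ((k0 : Fin K) : ℕ) = 0 := by
          simp only [hk0]
          omega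
        rw [hzz, pow_zero, Matrix.one_mulVec, mulVec_eq_sum_cols]
        apply sum_mem
        intro l _
        by_cases hl : l ∈ T
        · exact smul_mem _ _ (subset_span ⟨l, by simpa using hl, rfl⟩)
        · have hl0 : h k0 l = 0 := by
            rw [hT, Set.Finite.mem_toFinset] at hl
            simpa using hl
          rw [hl0, zero_smul]
          exact zero_mem _
    simp only [hP, if_pos hTcard]
    exact hmem
  obtain ⟨T, hTtop⟩ := Subspace.exists_eq_top_of_iUnion_eq_univ hcover
  by_cases hTc : T.card ≤ s
  · rw [hP] at hTtop
    simp only [if_pos hTc] at hTtop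
    have h1 : finrank ℝ
        ((span ℝ (hcol H '' ↑T) ⊔ LinearMap.range D.mulVecLin : Submodule ℝ (Fin N → ℝ))) = N := by
      rw [hTtop, finrank_top]
      simp
    have h2 : finrank ℝ (span ℝ (hcol H '' ↑T)) ≤ T.card := by
      have h3 := finrank_span_finset_le_card (R := ℝ) (T.image (hcol H))
      rw [Set.finrank] at h3
      rw [← Finset.coe_image]
      exact le_trans h3 (Finset.card_image_le)
    have h4 := Submodule.finrank_sup_add_finrank_inf_eq
      (span ℝ (hcol H '' ↑T)) (LinearMap.range D.mulVecLin)
    have h5 : D.rank = finrank ℝ (LinearMap.range D.mulVecLin) := rfl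
    omega
  · rw [hP] at hTtop
    simp only [if_neg hTc] at hTtop
    exact absurd hTtop bot_ne_top
end SCAux

/-- The system `(D,H)` is `s`-sparse-controllable iff for every `λ ∈ ℂ` the matrix
`[λI − D | H]` has rank `N` and `N ≤ s + rank D`. -/
theorem sparse_controllable_iff_pbh (N L s : ℕ) (hN : 0 < N) (hL : 0 < L)
    (hs : 0 < s) (hsL : s ≤ L)
    (D : Matrix (Fin N) (Fin N) ℝ) (H : Matrix (Fin N) (Fin L) ℝ) :
    SparseControllable N L s D H ↔
      ((∀ lam : ℂ, (pbhMatrix D H lam).rank = N) ∧ N ≤ s + D.rank) := by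
  constructor
  · intro hsc
    have hreach : ∀ x : Fin N → ℝ, ∃ K : ℕ, 0 < K ∧ ∃ h : Fin K → Fin L → ℝ,
        (∀ k, IsSparse s (h k)) ∧ x = ∑ k : Fin K, (D ^ (K - 1 - (k : ℕ))) *ᵥ (H *ᵥ h k) := by
      intro x
      obtain ⟨K, hK, h, hsp, hst⟩ := hsc 0 x
      refine ⟨K, hK, h, hsp, ?_⟩
      rw [Steers] at hst
      simpa [Matrix.mulVec_zero] using hst
    exact ⟨SCAux.pbh_rank_of_reach D H hN s hreach, SCAux.dim_cond_of_reach D H hN s hreach⟩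
  · rintro ⟨hpbh, hrk⟩
    intro xinit xfinal
    refine ⟨N + L * N, by omega, ?_⟩
    obtain ⟨h, hsp, hsum⟩ := SCAux.reach_all D H s hN hs hpbh hrk
      (xfinal - (D ^ (N + L * N)) *ᵥ xinit)
    exact ⟨h, hsp, hsum⟩
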